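/- For every q > 0 there exists a constant C > 0, depending only on q, with the following property: for every ε ∈ (0,1], if G_{ε,q} : 𝔻 → 𝔻 denotes the inverse of the bijection F_{ε,q} : 𝔻 → 𝔻, then G_{ε,q} is differentiable and its real Fréchet derivative satisfies ‖DG_{ε,q}(w)‖ ≤ C (ε² + |w|²)^{-q/2} for all w ∈ 𝔻. -/

import Mathlib

open Metric Set

/-- The change-of-variables map `F_{ε,q}(t) = ((ε² + |t|²)/(1 + ε²))^{q/2} · t` from (2.10). -/
noncomputable def Feq (ε q : ℝ) (t : ℂ) : ℂ :=
  (((ε ^ 2 + ‖t‖ ^ 2) / (1 + ε ^ 2)) ^ (q / 2) : ℝ) • t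


noncomputable def Dmap (a c : ℝ) (t : ℂ) : ℂ →L[ℝ] ℂ :=
  a • ContinuousLinearMap.id ℝ ℂ +
    ContinuousLinearMap.smulRight
      (c • (Complex.reCLM.comp (ContinuousLinearMap.mul ℝ ℂ ((starRingEnd ℂ) t)))) t

lemma Dmap_apply (a c : ℝ) (t h : ℂ) :
    Dmap a c t h = a • h + (c * ((starRingEnd ℂ) t * h).re) • t := by
  simp [Dmap, ContinuousLinearMap.smul_apply]

lemma feq_hasStrict (ε q : ℝ) (hε : 0 < ε) (t : ℂ) :
    HasStrictFDerivAt (Feq ε q)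
      (Dmap (((ε ^ 2 + Complex.normSq t) / (1 + ε ^ 2)) ^ (q / 2))
        (q * ((ε ^ 2 + Complex.normSq t) / (1 + ε ^ 2)) ^ (q / 2 - 1) / (1 + ε ^ 2)) t) t := by
  have h1 : (0:ℝ) < 1 + ε ^ 2 := by positivity
  have h0 : (0:ℝ) < ε ^ 2 + Complex.normSq t := by
    have := Complex.normSq_nonneg t; positivity
  have hre : HasStrictFDerivAt Complex.re Complex.reCLM t := Complex.reCLM.hasStrictFDerivAt
  have him : HasStrictFDerivAt Complex.im Complex.imCLM t := Complex.imCLM.hasStrictFDerivAt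
  have hns : HasStrictFDerivAt Complex.normSq
      ((t.re • Complex.reCLM + t.re • Complex.reCLM) +
       (t.im • Complex.imCLM + t.im • Complex.imCLM)) t := by
    have := (hre.mul hre).add (him.mul him)
    have e : (Complex.normSq : ℂ → ℝ) = Complex.re * Complex.re + Complex.im * Complex.im := by
      funext z; simp [Complex.normSq_apply]
    rw [e]; exact this
  have hinner : HasStrictFDerivAt (fun z : ℂ => (ε ^ 2 + Complex.normSq z) / (1 + ε ^ 2))
      ((1 + ε ^ 2)⁻¹ • ((t.re • Complex.reCLM + t.re • Complex.reCLM) +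
        (t.im • Complex.imCLM + t.im • Complex.imCLM))) t := by
    have := ((hasStrictFDerivAt_const (ε ^ 2) t).add hns).mul_const ((1 + ε ^ 2)⁻¹)
    simpa [div_eq_mul_inv, zero_add] using this
  have hrpow := hinner.rpow_const (p := q / 2) (Or.inl (by positivity))
  have hsmul := hrpow.smul (hasStrictFDerivAt_id t)
  have hfun : Feq ε q = fun z : ℂ =>
      (((ε ^ 2 + Complex.normSq z) / (1 + ε ^ 2)) ^ (q / 2) : ℝ) • z := by
    funext z; simp [Feq, Complex.sq_norm]
  rw [hfun]
  refine (hsmul : HasStrictFDerivAt (fun z : ℂ =>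
      (((ε ^ 2 + Complex.normSq z) / (1 + ε ^ 2)) ^ (q / 2) : ℝ) • z) _ t).congr_fderiv (Eq.symm ?_)
  ext h
  simp only [Dmap, ContinuousLinearMap.add_apply, ContinuousLinearMap.smul_apply,
    ContinuousLinearMap.coe_smul', Pi.smul_apply, ContinuousLinearMap.id_apply,
    ContinuousLinearMap.smulRight_apply, ContinuousLinearMap.coe_comp', Function.comp_apply,
    ContinuousLinearMap.mul_apply', Complex.reCLM_apply, Complex.imCLM_apply]
  congr 1
  simp only [id_eq, smul_eq_mul]
  congr 1
  simp [Complex.mul_re, Complex.conj_re, Complex.conj_im]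
  ring

lemma dmap_lower (a c : ℝ) (ha : 0 < a) (hc : 0 ≤ c) (t h : ℂ) :
    a * ‖h‖ ≤ ‖Dmap a c t h‖ := by
  rcases eq_or_ne h 0 with rfl | hh
  · simp
  · have hre : (((starRingEnd ℂ) h) * Dmap a c t h).re =
        a * (h.re ^ 2 + h.im ^ 2) + c * (t.re * h.re + t.im * h.im) ^ 2 := by
      rw [Dmap_apply]
      simp [Complex.real_smul, Complex.mul_re, Complex.mul_im, Complex.add_re, Complex.add_im]
      ring
    have h2 : ‖h‖ ^ 2 = h.re ^ 2 + h.im ^ 2 := by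
      rw [Complex.sq_norm, Complex.normSq_apply]; ring
    have hub : (((starRingEnd ℂ) h) * Dmap a c t h).re ≤ ‖h‖ * ‖Dmap a c t h‖ := by
      calc (((starRingEnd ℂ) h) * Dmap a c t h).re
          ≤ ‖((starRingEnd ℂ) h) * Dmap a c t h‖ := Complex.re_le_norm _
        _ = ‖h‖ * ‖Dmap a c t h‖ := by
            rw [norm_mul, Complex.norm_conj]
    have hpos : 0 < ‖h‖ := norm_pos_iff.2 hh
    nlinarith [mul_nonneg hc (sq_nonneg (t.re * h.re + t.im * h.im))]

lemma dmap_equiv (a c : ℝ) (ha : 0 < a) (hc : 0 ≤ c) (t : ℂ) :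
    ∃ E : ℂ ≃L[ℝ] ℂ, (E : ℂ →L[ℝ] ℂ) = Dmap a c t ∧ ‖(E.symm : ℂ →L[ℝ] ℂ)‖ ≤ a⁻¹ := by
  have hinj : Function.Injective (Dmap a c t) := by
    intro x y hxy
    have h1 := dmap_lower a c ha hc t (x - y)
    rw [map_sub, hxy, sub_self, norm_zero] at h1
    have h2 : ‖x - y‖ ≤ 0 := by nlinarith [norm_nonneg (x - y)]
    have := le_antisymm h2 (norm_nonneg _)
    rwa [norm_eq_zero, sub_eq_zero] at this
  have hsurj : Function.Surjective (Dmap a c t) :=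
    (LinearMap.injective_iff_surjective (f := (Dmap a c t : ℂ →ₗ[ℝ] ℂ))).1 hinj
  let L : ℂ ≃ₗ[ℝ] ℂ := LinearEquiv.ofBijective ((Dmap a c t) : ℂ →ₗ[ℝ] ℂ) ⟨hinj, hsurj⟩
  refine ⟨L.toContinuousLinearEquiv, by ext h; rfl, ?_⟩
  refine ContinuousLinearMap.opNorm_le_bound _ (inv_nonneg.2 ha.le) fun u => ?_
  set v := L.toContinuousLinearEquiv.symm u with hv
  have happ : Dmap a c t v = u := L.toContinuousLinearEquiv.apply_symm_apply u
  have h1 := dmap_lower a c ha hc t v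
  rw [happ] at h1
  have : ‖v‖ ≤ a⁻¹ * ‖u‖ := by
    rw [le_inv_mul_iff₀ ha] at *
    · linarith
  exact this


/-- Estimate (2.12): for every `q > 0` there is `C > 0` depending only on `q` such that for
every `ε ∈ (0,1]`, the inverse `G_{ε,q}` of the bijection `F_{ε,q} : 𝔻 → 𝔻` is differentiable
and its real Fréchet derivative satisfies `‖DG_{ε,q}(w)‖ ≤ C (ε² + |w|²)^{-q/2}` on `𝔻`. -/
theorem stmt_2 (q : ℝ) (hq : 0 < q) :
    ∃ C : ℝ, 0 < C ∧ ∀ ε ∈ Set.Ioc (0 : ℝ) 1, ∀ G : ℂ → ℂ,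
      Set.InvOn G (Feq ε q) (ball (0 : ℂ) 1) (ball (0 : ℂ) 1) →
      Set.MapsTo G (ball (0 : ℂ) 1) (ball (0 : ℂ) 1) →
      ∀ w ∈ ball (0 : ℂ) 1,
        DifferentiableAt ℝ G w ∧
        ‖fderiv ℝ G w‖ ≤ C * (ε ^ 2 + ‖w‖ ^ 2) ^ (-q / 2) := by
  refine ⟨(2 : ℝ) ^ (q / 2), Real.rpow_pos_of_pos two_pos _, ?_⟩
  rintro ε ⟨hε0, hε1⟩ G hinv hmaps w hw
  set t := G w with ht_def
  have ht : t ∈ ball (0 : ℂ) 1 := hmaps hw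
  have hFt : Feq ε q t = w := hinv.2 hw
  have h1 : (0:ℝ) < 1 + ε ^ 2 := by positivity
  have h0 : (0:ℝ) < ε ^ 2 + Complex.normSq t := by
    have := Complex.normSq_nonneg t; positivity
  set u : ℝ := (ε ^ 2 + Complex.normSq t) / (1 + ε ^ 2) with hu_def
  have hu : 0 < u := div_pos h0 h1
  set a : ℝ := u ^ (q / 2) with ha_def
  set c : ℝ := q * u ^ (q / 2 - 1) / (1 + ε ^ 2) with hc_def
  have ha : 0 < a := Real.rpow_pos_of_pos hu _
  have hc : 0 ≤ c := by
    have := Real.rpow_pos_of_pos hu (q / 2 - 1)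
    positivity
  obtain ⟨E, hE, hEs⟩ := dmap_equiv a c ha hc t
  have hF : HasStrictFDerivAt (Feq ε q) (E : ℂ →L[ℝ] ℂ) t := by
    rw [hE]; exact feq_hasStrict ε q hε0 t
  have hg : ∀ᶠ x in nhds t, G (Feq ε q x) = x :=
    Filter.eventually_of_mem (isOpen_ball.mem_nhds ht) hinv.1
  have hG : HasStrictFDerivAt G (E.symm : ℂ →L[ℝ] ℂ) w := by
    have := hF.to_local_left_inverse hg
    rwa [hFt] at this
  refine ⟨hG.hasFDerivAt.differentiableAt, ?_⟩
  rw [hG.hasFDerivAt.fderiv]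
  refine hEs.trans ?_
  -- ‖·‖: a⁻¹ = u ^ (-(q/2)) ≤ 2^(q/2) * (ε² + |w|²)^(-q/2)
  have habs : ‖w‖ ≤ ‖t‖ := by
    have htlt : ‖t‖ < 1 := by simpa [Complex.dist_eq] using ht
    have hg1 : u ^ (q / 2) ≤ 1 := by
      refine Real.rpow_le_one hu.le ?_ (by positivity)
      rw [div_le_one h1]
      have : Complex.normSq t ≤ 1 := by
        rw [← Complex.sq_norm]; nlinarith [norm_nonneg t]
      linarith
    have hw_eq : ‖w‖ = u ^ (q / 2) * ‖t‖ := by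
      rw [← hFt]; simp [Feq, Complex.sq_norm, ← hu_def, abs_of_nonneg (Real.rpow_pos_of_pos hu (q/2)).le]
    rw [hw_eq]
    nlinarith [norm_nonneg t]
  have hw0 : (0:ℝ) < ε ^ 2 + ‖w‖ ^ 2 := by positivity
  have hmono : (ε ^ 2 + Complex.normSq t) ^ (-q / 2) ≤ (ε ^ 2 + ‖w‖ ^ 2) ^ (-q / 2) := by
    refine Real.rpow_le_rpow_of_nonpos hw0 ?_ (by linarith)
    rw [← Complex.sq_norm]
    nlinarith [norm_nonneg w, norm_nonneg t]
  have hainv : a⁻¹ = (1 + ε ^ 2) ^ (q / 2) * (ε ^ 2 + Complex.normSq t) ^ (-q / 2) := by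
    rw [ha_def, ← Real.rpow_neg hu.le, hu_def, Real.div_rpow h0.le h1.le,
      Real.rpow_neg h1.le, div_inv_eq_mul, mul_comm, neg_div]
  rw [hainv]
  have h2 : (1 + ε ^ 2 : ℝ) ^ (q / 2) ≤ (2:ℝ) ^ (q / 2) := by
    refine Real.rpow_le_rpow (by positivity) (by nlinarith) (by positivity)
  have := mul_le_mul h2 hmono (Real.rpow_nonneg h0.le _) (by positivity)
  -- careful with a⁻¹ expression
  exact this
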